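/- Let M ∈ ℂ with Re M > 0 and a > −1. Define K₁(z,t;M) as the kernel 4^{−M} e^{−Mt}((e^t+1)² − z²)^{−1/2+M} F(1/2−M, 1/2−M; 1; ((e^t−1)²−z²)/((e^t+1)²−z²)) for 0 ≤ z ≤ e^t − 1. Then there is C(M,a) with ∫₀¹ (φ(t)s)^a |K₁(φ(t)s, t; M)| φ(t) ds ≤ C(M,a) t^{a+1} for all t ∈ (0,1), where φ(t) = e^t − 1. -/

import Mathlib

open Real

/-- Gauss hypergeometric function ₂F₁ (complex version), as a power series. -/
noncomputable def hypC (a b c z : ℂ) : ℂ :=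
  ∑' n : ℕ, (∏ k ∈ Finset.range n, ((a + k) * (b + k) / ((c + k) * (k + 1)))) * z ^ n

/-- The kernel K₁(z,t;M). -/
noncomputable def K₁ (z t : ℝ) (M : ℂ) : ℂ :=
  (4 : ℂ) ^ (-M) * Complex.exp (-M * t) *
    (((Real.exp t + 1) ^ 2 - z ^ 2 : ℝ) : ℂ) ^ (-(1/2 : ℂ) + M) *
    hypC (1/2 - M) (1/2 - M) 1
      ((((Real.exp t - 1) ^ 2 - z ^ 2) / ((Real.exp t + 1) ^ 2 - z ^ 2) : ℝ) : ℂ)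

noncomputable def coef (A : ℂ) (n : ℕ) : ℂ :=
  ∏ k ∈ Finset.range n, ((A + k) * (A + k) / ((1 + k) * (k + 1)))

lemma hypC_eq (A : ℂ) (z : ℂ) : hypC A A 1 z = ∑' n : ℕ, coef A n * z ^ n := rfl

lemma coef_succ (A : ℂ) (n : ℕ) :
    coef A (n + 1) = coef A n * ((A + n) * (A + n) / ((1 + n) * (n + 1))) :=
  Finset.prod_range_succ _ _

lemma norm_coef_succ (A : ℂ) (n : ℕ) :
    ‖coef A (n + 1)‖ = ‖coef A n‖ * (‖A + n‖ / (n + 1)) ^ 2 := by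
  rw [coef_succ, norm_mul, norm_div, norm_mul, norm_mul]
  have h1 : ‖(1 + n : ℂ)‖ = (n : ℝ) + 1 := by
    rw [show ((1 : ℂ) + n) = ((n + 1 : ℕ) : ℂ) by push_cast; ring]
    rw [Complex.norm_natCast]; push_cast; ring
  have h2 : ‖((n : ℂ) + 1)‖ = (n : ℝ) + 1 := by
    rw [show ((n : ℂ) + 1) = ((n + 1 : ℕ) : ℂ) by push_cast; ring]
    rw [Complex.norm_natCast]; push_cast; ring
  rw [h1, h2]
  field_simp

lemma summable_u (A : ℂ) : Summable (fun n : ℕ => ‖coef A n‖ * (3/4 : ℝ) ^ n) := by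
  apply summable_of_ratio_norm_eventually_le (r := 19/20) (by norm_num)
  filter_upwards [Filter.eventually_ge_atTop (⌈10 * ‖A‖⌉₊)] with n hn
  have hq : 10 * ‖A‖ ≤ n := by
    calc 10 * ‖A‖ ≤ (⌈10 * ‖A‖⌉₊ : ℝ) := Nat.le_ceil _
    _ ≤ n := by exact_mod_cast hn
  have hAn : ‖A + n‖ ≤ ‖A‖ + n := by
    calc ‖A + (n : ℂ)‖ ≤ ‖A‖ + ‖(n : ℂ)‖ := norm_add_le _ _
    _ = ‖A‖ + n := by rw [Complex.norm_natCast]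
  have hA0 : 0 ≤ ‖A‖ := norm_nonneg _
  have key : (‖A + n‖ / (n + 1)) ^ 2 * (3/4) ≤ 19/20 := by
    have hn1 : (0 : ℝ) < (n : ℝ) + 1 := by positivity
    have h11 : ‖A + n‖ ≤ (11/10) * ((n : ℝ) + 1) := by nlinarith
    have : (‖A + n‖ / (n + 1)) ≤ 11/10 := by
      rw [div_le_iff₀ hn1]; linarith
    nlinarith [norm_nonneg (A + (n : ℂ)), div_nonneg (norm_nonneg (A + (n:ℂ))) hn1.le]
  rw [Real.norm_of_nonneg (by positivity), Real.norm_of_nonneg (by positivity),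
    norm_coef_succ, pow_succ]
  have hc : 0 ≤ ‖coef A n‖ * (3/4 : ℝ) ^ n := by positivity
  calc ‖coef A n‖ * (‖A + n‖ / (n + 1)) ^ 2 * ((3/4:ℝ) ^ n * (3/4))
      = (‖coef A n‖ * (3/4:ℝ)^n) * ((‖A + n‖ / (n + 1)) ^ 2 * (3/4)) := by ring
    _ ≤ (‖coef A n‖ * (3/4:ℝ)^n) * (19/20) := by
        exact mul_le_mul_of_nonneg_left key hc
    _ = 19/20 * (‖coef A n‖ * (3/4:ℝ)^n) := by ring

lemma hypC_bound (A : ℂ) {x : ℂ} (hx : ‖x‖ ≤ 3/4) :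
    ‖hypC A A 1 x‖ ≤ ∑' n : ℕ, ‖coef A n‖ * (3/4 : ℝ) ^ n := by
  rw [hypC_eq]
  have hle : ∀ n : ℕ, ‖coef A n * x ^ n‖ ≤ ‖coef A n‖ * (3/4 : ℝ) ^ n := by
    intro n
    rw [norm_mul, norm_pow]
    exact mul_le_mul_of_nonneg_left (pow_le_pow_left₀ (norm_nonneg _) hx n) (norm_nonneg _)
  have hs : Summable (fun n : ℕ => ‖coef A n * x ^ n‖) :=
    (summable_u A).of_nonneg_of_le (fun n => norm_nonneg _) hle
  exact (norm_tsum_le_tsum_norm hs).trans (Summable.tsum_le_tsum hle hs (summable_u A))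

lemma hypC_continuousOn (A : ℂ) :
    ContinuousOn (hypC A A 1) (Metric.closedBall 0 (3/4)) := by
  have : ContinuousOn (fun z : ℂ => ∑' n : ℕ, coef A n * z ^ n)
      (Metric.closedBall 0 (3/4)) := by
    apply continuousOn_tsum (u := fun n => ‖coef A n‖ * (3/4 : ℝ) ^ n)
    · intro n; exact (continuous_const.mul (continuous_pow n)).continuousOn
    · exact summable_u A
    · intro n z hz
      rw [Metric.mem_closedBall, dist_zero_right] at hz
      rw [norm_mul, norm_pow]
      exact mul_le_mul_of_nonneg_left (pow_le_pow_left₀ (norm_nonneg _) hz n) (norm_nonneg _)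
  exact this
-- basic facts
lemma X_ge (t z : ℝ) (ht : 0 ≤ t) (hz : 0 ≤ z) (hz1 : z ≤ Real.exp t - 1) :
    4 ≤ (Real.exp t + 1) ^ 2 - z ^ 2 := by
  have h1 : 1 ≤ Real.exp t := Real.one_le_exp ht
  nlinarith

lemma X_le (t z : ℝ) (ht1 : t ≤ 1) (hz : 0 ≤ z) :
    (Real.exp t + 1) ^ 2 - z ^ 2 ≤ (Real.exp 1 + 1) ^ 2 := by
  have h1 : Real.exp t ≤ Real.exp 1 := Real.exp_le_exp.mpr ht1
  have h2 : 0 < Real.exp t := Real.exp_pos t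
  nlinarith

lemma ratio_mem (t z : ℝ) (ht : 0 ≤ t) (ht1 : t ≤ 1) (hz : 0 ≤ z) (hz1 : z ≤ Real.exp t - 1) :
    0 ≤ ((Real.exp t - 1) ^ 2 - z ^ 2) / ((Real.exp t + 1) ^ 2 - z ^ 2) ∧
    ((Real.exp t - 1) ^ 2 - z ^ 2) / ((Real.exp t + 1) ^ 2 - z ^ 2) ≤ 3/4 := by
  have hX : 4 ≤ (Real.exp t + 1) ^ 2 - z ^ 2 := X_ge t z ht hz hz1
  have hXpos : 0 < (Real.exp t + 1) ^ 2 - z ^ 2 := by linarith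
  have hnum0 : 0 ≤ (Real.exp t - 1) ^ 2 - z ^ 2 := by nlinarith
  have he : Real.exp 1 < 2.7182818286 := Real.exp_one_lt_d9
  have he2 : Real.exp t ≤ Real.exp 1 := Real.exp_le_exp.mpr ht1
  have hnum3 : (Real.exp t - 1) ^ 2 - z ^ 2 ≤ 3 := by nlinarith
  constructor
  · exact div_nonneg hnum0 hXpos.le
  · rw [div_le_iff₀ hXpos]; nlinarith

noncomputable def S (A : ℂ) : ℝ := ∑' n : ℕ, ‖coef A n‖ * (3/4 : ℝ) ^ n
lemma S_nonneg (A : ℂ) : 0 ≤ S A := tsum_nonneg (fun n => by positivity)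
lemma hypC_bound' (A : ℂ) {x : ℂ} (hx : ‖x‖ ≤ 3/4) : ‖hypC A A 1 x‖ ≤ S A := hypC_bound A hx

lemma K_norm_bound' (M : ℂ) (hM : 0 < M.re) :
    ∀ t z : ℝ, 0 < t → t ≤ 1 → 0 ≤ z → z ≤ Real.exp t - 1 →
      ‖K₁ z t M‖ ≤ ‖(4 : ℂ) ^ (-M)‖ *
        ((4 : ℝ) ^ (M.re - 1/2) + ((Real.exp 1 + 1) ^ 2) ^ (M.re - 1/2)) * S (1/2 - M) := by
  intro t z ht ht1 hz hz1
  set X : ℝ := (Real.exp t + 1) ^ 2 - z ^ 2 with hXdef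
  have hX4 : 4 ≤ X := X_ge t z ht.le hz hz1
  have hXpos : (0:ℝ) < X := by linarith
  have hXle : X ≤ (Real.exp 1 + 1) ^ 2 := X_le t z ht1 hz
  have hcpow : ‖((X : ℝ) : ℂ) ^ (-(1/2 : ℂ) + M)‖ ≤
      (4 : ℝ) ^ (M.re - 1/2) + ((Real.exp 1 + 1) ^ 2) ^ (M.re - 1/2) := by
    rw [Complex.norm_cpow_eq_rpow_re_of_pos hXpos]
    have hre : (-(1/2 : ℂ) + M).re = M.re - 1/2 := by simp; ring
    rw [hre]
    rcases le_or_gt 0 (M.re - 1/2) with hc | hc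
    · have := Real.rpow_le_rpow hXpos.le hXle hc
      have h4 : (0:ℝ) ≤ (4:ℝ) ^ (M.re - 1/2) := (Real.rpow_pos_of_pos (by norm_num) _).le
      linarith
    · have := Real.rpow_le_rpow_of_nonpos (by norm_num) hX4 hc.le
      have h4 : (0:ℝ) ≤ ((Real.exp 1 + 1) ^ 2 : ℝ) ^ (M.re - 1/2) :=
        (Real.rpow_pos_of_pos (by positivity) _).le
      linarith
  have hexp : ‖Complex.exp (-M * t)‖ ≤ 1 := by
    rw [Complex.norm_exp]
    rw [Real.exp_le_one_iff]
    have : (-M * (t:ℂ)).re = -(M.re * t) := by simp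
    rw [this]
    nlinarith
  have hhyp : ‖hypC (1/2 - M) (1/2 - M) 1
      ((((Real.exp t - 1) ^ 2 - z ^ 2) / X : ℝ) : ℂ)‖ ≤ S (1/2 - M) := by
    apply hypC_bound'
    rw [Complex.norm_real, Real.norm_eq_abs]
    have := ratio_mem t z ht.le ht1 hz hz1
    rw [abs_of_nonneg this.1]
    exact this.2
  have h4n : (0:ℝ) ≤ ‖(4 : ℂ) ^ (-M)‖ := norm_nonneg _
  calc ‖K₁ z t M‖ = ‖(4 : ℂ) ^ (-M)‖ * ‖Complex.exp (-M * t)‖ *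
        ‖((X : ℝ) : ℂ) ^ (-(1/2 : ℂ) + M)‖ *
        ‖hypC (1/2 - M) (1/2 - M) 1 ((((Real.exp t - 1) ^ 2 - z ^ 2) / X : ℝ) : ℂ)‖ := by
        rw [K₁, norm_mul, norm_mul, norm_mul]
    _ ≤ ‖(4 : ℂ) ^ (-M)‖ * 1 *
        ((4 : ℝ) ^ (M.re - 1/2) + ((Real.exp 1 + 1) ^ 2) ^ (M.re - 1/2)) * S (1/2 - M) := by
        gcongr
    _ = _ := by ring

lemma K_continuousOn (M : ℂ) (t : ℝ) (ht : 0 < t) (ht1 : t ≤ 1) :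
    ContinuousOn (fun s : ℝ => K₁ ((Real.exp t - 1) * s) t M) (Set.Icc 0 1) := by
  have hzfacts : ∀ s ∈ Set.Icc (0:ℝ) 1, 0 ≤ (Real.exp t - 1) * s ∧
      (Real.exp t - 1) * s ≤ Real.exp t - 1 := by
    intro s hs
    have hφ : 0 ≤ Real.exp t - 1 := by
      have := Real.one_le_exp ht.le; linarith
    exact ⟨mul_nonneg hφ hs.1, by nlinarith [hs.2]⟩
  have contz : Continuous (fun s : ℝ => (Real.exp t - 1) * s) := by continuity
  have contX : Continuous (fun s : ℝ => (Real.exp t + 1) ^ 2 - ((Real.exp t - 1) * s) ^ 2) := by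
    continuity
  have contNum : Continuous (fun s : ℝ => (Real.exp t - 1) ^ 2 - ((Real.exp t - 1) * s) ^ 2) := by
    continuity
  have hXpos : ∀ s ∈ Set.Icc (0:ℝ) 1,
      (0:ℝ) < (Real.exp t + 1) ^ 2 - ((Real.exp t - 1) * s) ^ 2 := by
    intro s hs
    obtain ⟨h1, h2⟩ := hzfacts s hs
    have := X_ge t _ ht.le h1 h2
    linarith
  apply ContinuousOn.mul
  apply ContinuousOn.mul
  · apply ContinuousOn.mul continuousOn_const continuousOn_const
  · -- cpow part
    intro s hs
    apply ContinuousAt.continuousWithinAt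
    have hpos := hXpos s hs
    have h1 : ContinuousAt (fun z : ℂ => z ^ (-(1/2 : ℂ) + M))
        ((((Real.exp t + 1) ^ 2 - ((Real.exp t - 1) * s) ^ 2 : ℝ)) : ℂ) := by
      apply continuousAt_cpow_const
      apply Complex.mem_slitPlane_iff.mpr
      left
      rw [Complex.ofReal_re]
      exact hpos
    have h2 : ContinuousAt (fun x : ℝ =>
        (((Real.exp t + 1) ^ 2 - ((Real.exp t - 1) * x) ^ 2 : ℝ) : ℂ)) s :=
      (Complex.continuous_ofReal.comp contX).continuousAt
    exact ContinuousAt.comp (g := fun z : ℂ => z ^ (-(1/2 : ℂ) + M)) h1 h2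
  · -- hyp part
    apply ContinuousOn.comp (hypC_continuousOn (1/2 - M))
    · apply Continuous.comp_continuousOn Complex.continuous_ofReal
      exact ContinuousOn.div contNum.continuousOn contX.continuousOn
        (fun s hs => (hXpos s hs).ne')
    · intro s hs
      rw [Metric.mem_closedBall, dist_zero_right, Complex.norm_real, Real.norm_eq_abs]
      obtain ⟨h1, h2⟩ := hzfacts s hs
      have := ratio_mem t _ ht.le ht1 h1 h2
      rw [abs_of_nonneg this.1]
      exact this.2
noncomputable def Cb (M : ℂ) : ℝ := ‖(4 : ℂ) ^ (-M)‖ *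
  ((4 : ℝ) ^ (M.re - 1/2) + ((Real.exp 1 + 1) ^ 2) ^ (M.re - 1/2)) * S (1/2 - M)

lemma Cb_nonneg (M : ℂ) : 0 ≤ Cb M := by
  unfold Cb
  have h1 : (0:ℝ) ≤ (4 : ℝ) ^ (M.re - 1/2) := (Real.rpow_pos_of_pos (by norm_num) _).le
  have h2 : (0:ℝ) ≤ ((Real.exp 1 + 1) ^ 2 : ℝ) ^ (M.re - 1/2) :=
    (Real.rpow_pos_of_pos (by positivity) _).le
  exact mul_nonneg (mul_nonneg (norm_nonneg _) (by linarith)) (S_nonneg _)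

lemma K_norm_bound (M : ℂ) (hM : 0 < M.re) :
    ∀ t z : ℝ, 0 < t → t ≤ 1 → 0 ≤ z → z ≤ Real.exp t - 1 → ‖K₁ z t M‖ ≤ Cb M :=
  K_norm_bound' M hM

theorem stmt17 (M : ℂ) (hM : 0 < M.re) (a : ℝ) (ha : a > -1) :
    ∃ C : ℝ, ∀ t : ℝ, 0 < t → t < 1 →
      (∫ s in (0:ℝ)..1, ((Real.exp t - 1) * s) ^ a *
          ‖K₁ ((Real.exp t - 1) * s) t M‖ * (Real.exp t - 1)) ≤
        C * t ^ (a + 1) := by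
  have ha1 : (0:ℝ) < a + 1 := by linarith
  refine ⟨Cb M * (Real.exp 1 - 1) ^ (a + 1) / (a + 1), ?_⟩
  intro t ht ht1
  set φ : ℝ := Real.exp t - 1 with hφdef
  have hφpos : 0 < φ := by
    have := Real.exp_lt_exp.mpr ht  -- exp 0 < exp t
    simp only [Real.exp_zero] at this
    simp [hφdef]; linarith
  have hφ1 : φ ≤ (Real.exp 1 - 1) * t := by
    have hc := convexOn_exp.2 (Set.mem_univ (0:ℝ)) (Set.mem_univ (1:ℝ))
      (show (0:ℝ) ≤ 1 - t by linarith) ht.le (by ring)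
    simp only [smul_eq_mul, mul_zero, mul_one, zero_add, Real.exp_zero] at hc
    simp only [hφdef]
    nlinarith
  -- integrability of the base rpow function
  have hsint : IntervalIntegrable (fun s : ℝ => s ^ a) MeasureTheory.volume 0 1 :=
    intervalIntegral.intervalIntegrable_rpow' ha
  have hbase : IntervalIntegrable (fun s : ℝ => (φ * s) ^ a) MeasureTheory.volume 0 1 := by
    rw [intervalIntegrable_iff_integrableOn_Ioc_of_le (by norm_num)]
    have h1 : MeasureTheory.IntegrableOn (fun s : ℝ => φ ^ a * s ^ a) (Set.Ioc 0 1) := by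
      have := hsint.const_mul (φ ^ a)
      rwa [intervalIntegrable_iff_integrableOn_Ioc_of_le (by norm_num)] at this
    apply h1.congr_fun _ measurableSet_Ioc
    intro s hs
    exact (Real.mul_rpow hφpos.le hs.1.le).symm
  have hKcont : ContinuousOn (fun s : ℝ => ‖K₁ (φ * s) t M‖ * φ) (Set.uIcc 0 1) := by
    rw [Set.uIcc_of_le (by norm_num : (0:ℝ) ≤ 1)]
    exact ((K_continuousOn M t ht ht1.le).norm).mul continuousOn_const
  have hf_int : IntervalIntegrable (fun s : ℝ => (φ * s) ^ a * (‖K₁ (φ * s) t M‖ * φ))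
      MeasureTheory.volume 0 1 := hbase.mul_continuousOn hKcont
  have hg_int : IntervalIntegrable (fun s : ℝ => Cb M * φ ^ a * φ * s ^ a)
      MeasureTheory.volume 0 1 := by
    simpa [mul_assoc] using hsint.const_mul (Cb M * φ ^ a * φ)
  have hle : ∀ s ∈ Set.Icc (0:ℝ) 1,
      (φ * s) ^ a * (‖K₁ (φ * s) t M‖ * φ) ≤ Cb M * φ ^ a * φ * s ^ a := by
    intro s hs
    have hz : 0 ≤ φ * s := mul_nonneg hφpos.le hs.1
    have hz1 : φ * s ≤ Real.exp t - 1 := by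
      have : φ * s ≤ φ * 1 := mul_le_mul_of_nonneg_left hs.2 hφpos.le
      simpa [hφdef] using this
    have hK := K_norm_bound M hM t (φ * s) ht ht1.le hz hz1
    rw [Real.mul_rpow hφpos.le hs.1]
    have h1 : 0 ≤ φ ^ a * s ^ a := mul_nonneg (Real.rpow_nonneg hφpos.le a) (Real.rpow_nonneg hs.1 a)
    calc φ ^ a * s ^ a * (‖K₁ (φ * s) t M‖ * φ)
        ≤ φ ^ a * s ^ a * (Cb M * φ) := by
          apply mul_le_mul_of_nonneg_left _ h1
          exact mul_le_mul_of_nonneg_right hK hφpos.le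
      _ = Cb M * φ ^ a * φ * s ^ a := by ring
  have hmono := intervalIntegral.integral_mono_on (by norm_num : (0:ℝ) ≤ 1) hf_int hg_int hle
  have hgval : (∫ s in (0:ℝ)..1, Cb M * φ ^ a * φ * s ^ a)
      = Cb M * φ ^ (a + 1) / (a + 1) := by
    rw [intervalIntegral.integral_const_mul, integral_rpow (Or.inl ha)]
    rw [Real.one_rpow, Real.zero_rpow (ne_of_gt ha1)]
    rw [Real.rpow_add_one (ne_of_gt hφpos)]
    ring
  have hfinal : Cb M * φ ^ (a + 1) / (a + 1) ≤
      Cb M * (Real.exp 1 - 1) ^ (a + 1) / (a + 1) * t ^ (a + 1) := by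
    have h2 : φ ^ (a+1) ≤ ((Real.exp 1 - 1) * t) ^ (a+1) :=
      Real.rpow_le_rpow hφpos.le hφ1 ha1.le
    have he1 : (0:ℝ) ≤ Real.exp 1 - 1 := by
      have := Real.one_le_exp (by norm_num : (0:ℝ) ≤ 1); linarith
    rw [Real.mul_rpow he1 ht.le] at h2
    have := mul_le_mul_of_nonneg_left h2 (Cb_nonneg M)
    rw [div_mul_eq_mul_div, div_le_div_iff_of_pos_right ha1]
    calc Cb M * φ ^ (a+1) ≤ Cb M * ((Real.exp 1 - 1) ^ (a+1) * t ^ (a+1)) := this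
      _ = Cb M * (Real.exp 1 - 1) ^ (a + 1) * t ^ (a + 1) := by ring
  calc (∫ s in (0:ℝ)..1, (φ * s) ^ a * ‖K₁ (φ * s) t M‖ * φ)
      = ∫ s in (0:ℝ)..1, (φ * s) ^ a * (‖K₁ (φ * s) t M‖ * φ) := by
        simp_rw [mul_assoc]
    _ ≤ Cb M * φ ^ (a + 1) / (a + 1) := by rw [← hgval]; exact hmono
    _ ≤ _ := hfinal
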